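/- Define γ^{(j)}(ρ) recursively by γ^{(1)}(ρ) = λ_w^{(1)} (1 + λ_e ρ)² and γ^{(j)}(ρ) = λ_w^{(j)} (1 + ρ(λ_e + Σ_{i=1}^{j−1} γ^{(i)}(ρ)))² for j ≥ 2, where λ_e, λ_w^{(i)} > 0. Then for each j ≥ 1, γ^{(j)} is a polynomial in ρ of degree 2^{j+1} − 2 whose leading coefficient is λ_e^{2^j} ∏_{i=1}^{j} (λ_w^{(i)})^{2^{j−i}} and whose remaining coefficients are all positive. -/

import Mathlib

open Finset Polynomial

/-- Partial-sum polynomial: `wordS k = λ_e + ∑_{i=1}^k γ⁽ⁱ⁾` as a polynomial. -/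
noncomputable def wordS (lam_e : ℝ) (lam_w : ℕ → ℝ) : ℕ → Polynomial ℝ
  | 0 => Polynomial.C lam_e
  | (k+1) => wordS lam_e lam_w k
      + Polynomial.C (lam_w (k+1)) * (1 + Polynomial.X * wordS lam_e lam_w k) ^ 2

lemma coeff_nonneg_of_pos {P : Polynomial ℝ} (h : ∀ i ≤ P.natDegree, 0 < P.coeff i) :
    ∀ i, 0 ≤ P.coeff i := by
  intro i
  rcases le_or_gt i P.natDegree with hi | hi
  · exact (h i hi).le
  · rw [P.coeff_eq_zero_of_natDegree_lt hi]

lemma pos_coeff_mul {P Q : Polynomial ℝ}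
    (hP : ∀ i ≤ P.natDegree, 0 < P.coeff i) (hQ : ∀ i ≤ Q.natDegree, 0 < Q.coeff i) :
    ∀ k ≤ P.natDegree + Q.natDegree, 0 < (P * Q).coeff k := by
  intro k hk
  rw [coeff_mul]
  apply Finset.sum_pos'
  · intro p _
    exact mul_nonneg (coeff_nonneg_of_pos hP _) (coeff_nonneg_of_pos hQ _)
  · refine ⟨(min k P.natDegree, k - min k P.natDegree), ?_, ?_⟩
    · rw [Finset.HasAntidiagonal.mem_antidiagonal]; omega
    · exact mul_pos (hP _ (min_le_right _ _)) (hQ _ (by omega))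

/-- Properties of the "new term" polynomial added at step `k+1`. -/
lemma wordN_props (lam_e : ℝ) (lam_w : ℕ → ℝ) (hlw : ∀ i, 0 < lam_w i) (k : ℕ)
    (S : Polynomial ℝ)
    (hd : S.natDegree = 2 ^ (k + 1) - 2)
    (hpos : ∀ i ≤ S.natDegree, 0 < S.coeff i) :
    (Polynomial.C (lam_w (k+1)) * (1 + Polynomial.X * S) ^ 2).natDegree = 2 ^ (k + 2) - 2
    ∧ (Polynomial.C (lam_w (k+1)) * (1 + Polynomial.X * S) ^ 2).leadingCoeff
        = lam_w (k+1) * S.leadingCoeff ^ 2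
    ∧ ∀ i ≤ (Polynomial.C (lam_w (k+1)) * (1 + Polynomial.X * S) ^ 2).natDegree,
        0 < (Polynomial.C (lam_w (k+1)) * (1 + Polynomial.X * S) ^ 2).coeff i := by
  have h2 : (2:ℕ) ≤ 2 ^ (k+1) := by
    calc (2:ℕ) = 2 ^ 1 := rfl
    _ ≤ 2 ^ (k+1) := Nat.pow_le_pow_right (by norm_num) (by omega)
  have hS0 : S ≠ 0 := by
    intro h
    have := hpos 0 (Nat.zero_le _)
    simp [h] at this
  set T : Polynomial ℝ := 1 + Polynomial.X * S with hT
  -- coefficients of T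
  have hTc0 : T.coeff 0 = 1 := by simp [hT]
  have hTcs : ∀ i, T.coeff (i + 1) = S.coeff i := by
    intro i
    simp [hT, coeff_add, Polynomial.coeff_X_mul, Polynomial.coeff_one]
  -- natDegree of T
  have hXS : (Polynomial.X * S).natDegree = S.natDegree + 1 := by
    rw [Polynomial.natDegree_mul Polynomial.X_ne_zero hS0, Polynomial.natDegree_X]
    omega
  have hTd : T.natDegree = S.natDegree + 1 := by
    rw [hT, add_comm, ← Polynomial.C_1, Polynomial.natDegree_add_C, hXS]
  have hTlc : T.leadingCoeff = S.leadingCoeff := by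
    rw [Polynomial.leadingCoeff, hTd, hTcs, Polynomial.leadingCoeff]
  have hTpos : ∀ i ≤ T.natDegree, 0 < T.coeff i := by
    intro i hi
    match i with
    | 0 => rw [hTc0]; norm_num
    | (i+1) =>
      rw [hTcs]
      exact hpos i (by omega)
  -- T ^ 2
  have hT2d : (T ^ 2).natDegree = 2 * T.natDegree := Polynomial.natDegree_pow T 2
  have hT2pos : ∀ i ≤ (T ^ 2).natDegree, 0 < (T ^ 2).coeff i := by
    intro i hi
    rw [sq]
    exact pos_coeff_mul hTpos hTpos i (by omega)
  have hC0 : lam_w (k+1) ≠ 0 := (hlw (k+1)).ne'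
  have hNd : (Polynomial.C (lam_w (k+1)) * T ^ 2).natDegree = 2 ^ (k+2) - 2 := by
    rw [Polynomial.natDegree_C_mul hC0, hT2d, hTd, hd]
    have : (2:ℕ) ^ (k+2) = 2 * 2 ^ (k+1) := by ring
    omega
  refine ⟨hNd, ?_, ?_⟩
  · rw [Polynomial.leadingCoeff_mul, Polynomial.leadingCoeff_C,
      Polynomial.leadingCoeff_pow, hTlc]
  · intro i hi
    have hCpos : ∀ j ≤ (Polynomial.C (lam_w (k+1))).natDegree,
        0 < (Polynomial.C (lam_w (k+1))).coeff j := by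
      intro j hj
      rw [Polynomial.natDegree_C] at hj
      interval_cases j
      simp [hlw (k+1)]
    apply pos_coeff_mul hCpos hT2pos
    rw [Polynomial.natDegree_C]
    rw [Polynomial.natDegree_C_mul hC0] at hi
    omega

lemma wordS_props (lam_e : ℝ) (lam_w : ℕ → ℝ) (hle : 0 < lam_e) (hlw : ∀ i, 0 < lam_w i) :
    ∀ k : ℕ,
    (wordS lam_e lam_w k).natDegree = 2 ^ (k+1) - 2
    ∧ (wordS lam_e lam_w k).leadingCoeff
        = lam_e ^ (2 ^ k) * ∏ i ∈ Finset.Icc 1 k, lam_w i ^ (2 ^ (k - i))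
    ∧ ∀ i ≤ (wordS lam_e lam_w k).natDegree, 0 < (wordS lam_e lam_w k).coeff i := by
  intro k
  induction k with
  | zero =>
    refine ⟨by simp [wordS], by simp [wordS], ?_⟩
    intro i hi
    simp only [wordS, Polynomial.natDegree_C, Nat.le_zero] at hi
    subst hi
    simpa [wordS] using hle
  | succ k ih =>
    obtain ⟨hd, hlc, hpos⟩ := ih
    set S := wordS lam_e lam_w k with hSdef
    obtain ⟨hNd, hNlc, hNpos⟩ := wordN_props lam_e lam_w hlw k S hd hpos
    set N := Polynomial.C (lam_w (k+1)) * (1 + Polynomial.X * S) ^ 2 with hNdef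
    have hwS : wordS lam_e lam_w (k+1) = S + N := rfl
    have h2 : (2:ℕ) ≤ 2 ^ (k+1) := by
      calc (2:ℕ) = 2 ^ 1 := rfl
      _ ≤ 2 ^ (k+1) := Nat.pow_le_pow_right (by norm_num) (by omega)
    have h2' : 2 ^ (k+1) ≤ 2 ^ (k+2) := Nat.pow_le_pow_right (by norm_num) (by omega)
    have h22 : (2:ℕ) ^ (k+2) = 2 * 2 ^ (k+1) := by ring
    have hdlt : S.natDegree < N.natDegree := by rw [hd, hNd]; omega
    have hd' : (S + N).natDegree = 2 ^ (k+2) - 2 := by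
      rw [Polynomial.natDegree_add_eq_right_of_natDegree_lt hdlt, hNd]
    have hlcpos : 0 < S.leadingCoeff := by
      have := Finset.prod_pos (fun i _ => pow_pos (hlw i) (2 ^ (k - i)))
        (s := Finset.Icc 1 k)
      rw [hlc]; positivity
    refine ⟨by rw [hwS, hd'], ?_, ?_⟩
    · -- leading coefficient
      have : (S + N).leadingCoeff = N.leadingCoeff := by
        unfold Polynomial.leadingCoeff
        rw [hd', ← hNd, Polynomial.coeff_add,
          S.coeff_eq_zero_of_natDegree_lt (by omega), zero_add]
      rw [hwS, this, hNlc, hlc]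
      rw [Finset.prod_Icc_succ_top (by omega : 1 ≤ k + 1)]
      have hprod : ∏ i ∈ Finset.Icc 1 k, lam_w i ^ (2 ^ (k + 1 - i))
          = (∏ i ∈ Finset.Icc 1 k, lam_w i ^ (2 ^ (k - i))) ^ 2 := by
        rw [← Finset.prod_pow]
        apply Finset.prod_congr rfl
        intro i hi
        rw [Finset.mem_Icc] at hi
        rw [← pow_mul]
        congr 1
        have : k + 1 - i = (k - i) + 1 := by omega
        rw [this, pow_succ]
      rw [hprod]
      have hle2 : lam_e ^ (2 ^ (k+1)) = (lam_e ^ (2 ^ k)) ^ 2 := by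
        rw [← pow_mul, ← pow_succ]
      rw [hle2]
      have : k + 1 - (k + 1) = 0 := by omega
      rw [this]
      ring
    · -- positivity
      intro i hi
      rw [hwS, Polynomial.coeff_add]
      rw [hwS, hd', ← hNd] at hi
      have := hNpos i hi
      have := coeff_nonneg_of_pos hpos i
      linarith

lemma wordS_eval (lam_e : ℝ) (lam_w : ℕ → ℝ) (γ : ℕ → ℝ → ℝ)
    (hγ : ∀ j : ℕ, 1 ≤ j → ∀ ρ : ℝ,
      γ j ρ = lam_w j * (1 + ρ * (lam_e + ∑ i ∈ Finset.Icc 1 (j - 1), γ i ρ)) ^ 2) :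
    ∀ k : ℕ, ∀ ρ : ℝ,
      (wordS lam_e lam_w k).eval ρ = lam_e + ∑ i ∈ Finset.Icc 1 k, γ i ρ := by
  intro k
  induction k with
  | zero => intro ρ; simp [wordS]
  | succ k ih =>
    intro ρ
    have hs : (wordS lam_e lam_w (k+1)).eval ρ
        = (wordS lam_e lam_w k).eval ρ
          + lam_w (k+1) * (1 + ρ * (wordS lam_e lam_w k).eval ρ) ^ 2 := by
      simp [wordS, mul_comm]
    rw [hs, ih, Finset.sum_Icc_succ_top (by omega : 1 ≤ k + 1)]
    rw [hγ (k+1) (by omega) ρ]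
    simp only [Nat.add_sub_cancel]
    ring

/-- Each equivalent-noise variance contribution `γ⁽ʲ⁾(ρ)` is a polynomial in `ρ` of degree
`2^{j+1} − 2` with leading coefficient `λ_e^{2^j} ∏_{i=1}^{j} (λ_w⁽ⁱ⁾)^{2^{j−i}}` and all
remaining coefficients positive. -/
theorem gamma_polynomial_structure
    (lam_e : ℝ) (lam_w : ℕ → ℝ) (hle : 0 < lam_e) (hlw : ∀ i, 0 < lam_w i)
    (γ : ℕ → ℝ → ℝ)
    (hγ : ∀ j : ℕ, 1 ≤ j → ∀ ρ : ℝ,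
      γ j ρ = lam_w j * (1 + ρ * (lam_e + ∑ i ∈ Finset.Icc 1 (j - 1), γ i ρ)) ^ 2) :
    ∀ j : ℕ, 1 ≤ j → ∃ P : Polynomial ℝ,
      (∀ ρ : ℝ, γ j ρ = P.eval ρ)
      ∧ P.natDegree = 2 ^ (j + 1) - 2
      ∧ P.leadingCoeff = lam_e ^ (2 ^ j) * ∏ i ∈ Finset.Icc 1 j, lam_w i ^ (2 ^ (j - i))
      ∧ ∀ i < P.natDegree, 0 < P.coeff i := by
  intro j hj
  obtain ⟨k, rfl⟩ : ∃ k, j = k + 1 := ⟨j - 1, by omega⟩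
  set S := wordS lam_e lam_w k with hSdef
  obtain ⟨hd, hlc, hpos⟩ := wordS_props lam_e lam_w hle hlw k
  obtain ⟨hNd, hNlc, hNpos⟩ := wordN_props lam_e lam_w hlw k S hd hpos
  refine ⟨Polynomial.C (lam_w (k+1)) * (1 + Polynomial.X * S) ^ 2, ?_, hNd, ?_, ?_⟩
  · intro ρ
    rw [hγ (k+1) (by omega) ρ]
    simp only [Nat.add_sub_cancel]
    rw [← wordS_eval lam_e lam_w γ hγ k ρ]
    simp [← hSdef, mul_comm]
  · rw [hNlc, hlc]
    rw [Finset.prod_Icc_succ_top (by omega : 1 ≤ k + 1)]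
    have hprod : ∏ i ∈ Finset.Icc 1 k, lam_w i ^ (2 ^ (k + 1 - i))
        = (∏ i ∈ Finset.Icc 1 k, lam_w i ^ (2 ^ (k - i))) ^ 2 := by
      rw [← Finset.prod_pow]
      apply Finset.prod_congr rfl
      intro i hi
      rw [Finset.mem_Icc] at hi
      rw [← pow_mul]
      congr 1
      have : k + 1 - i = (k - i) + 1 := by omega
      rw [this, pow_succ]
    rw [hprod]
    have hle2 : lam_e ^ (2 ^ (k+1)) = (lam_e ^ (2 ^ k)) ^ 2 := by
      rw [← pow_mul, ← pow_succ]
    rw [hle2]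
    have : k + 1 - (k + 1) = 0 := by omega
    rw [this]
    ring
  · intro i hi
    exact hNpos i hi.le
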